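/- Let M be a Γ-semiring having a proper generalized bi-Γ-ideal. Then every proper generalized bi-Γ-ideal of M is minimal if and only if the intersection of any two distinct proper generalized bi-Γ-ideals of M is empty. -/
import Mathlib


/-- A Γ-semiring: additive commutative semigroups `M` and `G` with a triple
product `M → G → M → M` satisfying distributivity and associativity laws. -/
structure GammaSemiring (M G : Type*) [AddCommSemigroup M] [AddCommSemigroup G] where
  tmul : M → G → M → M
  left_distrib : ∀ a γ b c, tmul a γ (b + c) = tmul a γ b + tmul a γ c
  right_distrib : ∀ a b γ c, tmul (a + b) γ c = tmul a γ c + tmul b γ c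
  gamma_distrib : ∀ a γ δ b, tmul a (γ + δ) b = tmul a γ b + tmul a δ b
  mul_assoc : ∀ a γ b δ c, tmul (tmul a γ b) δ c = tmul a γ (tmul b δ c)

namespace GammaSemiring

variable {M G : Type*} [AddCommSemigroup M] [AddCommSemigroup G]

/-- `AΓB`: the set of all finite (nonempty) sums `Σᵢ aᵢγᵢbᵢ` with `aᵢ ∈ A`,
`γᵢ ∈ Γ`, `bᵢ ∈ B`, realized as the additive subsemigroup closure of the set
of single products. -/
def sprod (gs : GammaSemiring M G) (A B : Set M) : Set M :=
  (AddSubsemigroup.closure {x | ∃ a ∈ A, ∃ γ : G, ∃ b ∈ B, x = gs.tmul a γ b} :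
    AddSubsemigroup M)

/-- A generalized bi-Γ-ideal of `M`: a nonempty subset `A` with `AΓMΓA ⊆ A`. -/
def IsGenBiIdeal (gs : GammaSemiring M G) (A : Set M) : Prop :=
  A.Nonempty ∧ gs.sprod (gs.sprod A Set.univ) A ⊆ A

/-- A sub-Γ-semiring: nonempty, closed under addition and the Γ-product. -/
def IsSubGammaSemiring (gs : GammaSemiring M G) (T : Set M) : Prop :=
  T.Nonempty ∧ (∀ a ∈ T, ∀ b ∈ T, a + b ∈ T) ∧
    ∀ a ∈ T, ∀ γ : G, ∀ b ∈ T, gs.tmul a γ b ∈ T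

/-- A generalized bi-Γ-ideal of the Γ-semiring `T` (a subset of `M`):
a nonempty subset `A ⊆ T` with `AΓTΓA ⊆ A`. -/
def IsGenBiIdealIn (gs : GammaSemiring M G) (T A : Set M) : Prop :=
  A.Nonempty ∧ A ⊆ T ∧ gs.sprod (gs.sprod A T) A ⊆ A

/-- A Γ-ideal of `M`. -/
def IsGammaIdeal (gs : GammaSemiring M G) (A : Set M) : Prop :=
  A.Nonempty ∧ (∀ a ∈ A, ∀ b ∈ A, a + b ∈ A) ∧
    ∀ a ∈ A, ∀ γ : G, ∀ x : M, gs.tmul x γ a ∈ A ∧ gs.tmul a γ x ∈ A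

/-- A quasi-Γ-ideal of `M`: a sub-Γ-semiring `A` with `AΓM ∩ MΓA ⊆ A`. -/
def IsQuasiGammaIdeal (gs : GammaSemiring M G) (A : Set M) : Prop :=
  gs.IsSubGammaSemiring A ∧ gs.sprod A Set.univ ∩ gs.sprod Set.univ A ⊆ A

/-- A bi-Γ-ideal of `M`: a sub-Γ-semiring `A` with `AΓMΓA ⊆ A`. -/
def IsBiIdeal (gs : GammaSemiring M G) (A : Set M) : Prop :=
  gs.IsSubGammaSemiring A ∧ gs.sprod (gs.sprod A Set.univ) A ⊆ A

/-- `M` is GB-simple: `M` is its unique generalized bi-Γ-ideal. -/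
def GBSimple (gs : GammaSemiring M G) : Prop :=
  ∀ A : Set M, gs.IsGenBiIdeal A → A = Set.univ

/-- The sub-Γ-semiring `T`, regarded as a Γ-semiring, is GB-simple. -/
def GBSimpleIn (gs : GammaSemiring M G) (T : Set M) : Prop :=
  ∀ A : Set M, gs.IsGenBiIdealIn T A → A = T

end GammaSemiring

open GammaSemiring

variable {M G : Type*} [AddCommSemigroup M] [AddCommSemigroup G]

lemma sprod_mono (gs : GammaSemiring M G) {A A' B B' : Set M}
    (hA : A ⊆ A') (hB : B ⊆ B') : gs.sprod A B ⊆ gs.sprod A' B' := by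
  apply AddSubsemigroup.closure_mono
  rintro x ⟨a, ha, γ, b, hb, rfl⟩
  exact ⟨a, hA ha, γ, b, hB hb, rfl⟩

theorem stmt17 (gs : GammaSemiring M G)
    (h : ∃ B : Set M, gs.IsGenBiIdeal B ∧ B ≠ Set.univ) :
    (∀ B : Set M, gs.IsGenBiIdeal B → B ≠ Set.univ →
        ∀ C : Set M, gs.IsGenBiIdeal C → C ⊆ B → C = B) ↔
      (∀ B₁ B₂ : Set M, gs.IsGenBiIdeal B₁ → B₁ ≠ Set.univ →
        gs.IsGenBiIdeal B₂ → B₂ ≠ Set.univ → B₁ ≠ B₂ → B₁ ∩ B₂ = ∅) := by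
  constructor
  · intro hmin B₁ B₂ h1 h1p h2 h2p hne
    by_contra hcap
    have hS : gs.IsGenBiIdeal (B₁ ∩ B₂) := by
      refine ⟨Set.nonempty_iff_ne_empty.mpr hcap, ?_⟩
      intro x hx
      exact ⟨h1.2 (sprod_mono gs (sprod_mono gs Set.inter_subset_left le_rfl)
          Set.inter_subset_left hx),
        h2.2 (sprod_mono gs (sprod_mono gs Set.inter_subset_right le_rfl)
          Set.inter_subset_right hx)⟩
    have e1 := hmin B₁ h1 h1p _ hS Set.inter_subset_left
    have e2 := hmin B₂ h2 h2p _ hS Set.inter_subset_right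
    exact hne (e1 ▸ e2)
  · intro hcap B hB hBp C hC hCB
    by_contra hne
    have hCp : C ≠ Set.univ := fun hcu => hBp (Set.univ_subset_iff.mp (hcu ▸ hCB))
    have := hcap C B hC hCp hB hBp hne
    rw [Set.inter_eq_self_of_subset_left hCB] at this
    exact hC.1.ne_empty this
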